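/- For $\lambda_1,\lambda_2>0$ with $\lambda_1\neq\lambda_2$ and all $D\ge 0$: $1+\frac{\lambda_1}{\lambda_2-\lambda_1}e^{-\lambda_2 D}-\frac{\lambda_2}{\lambda_2-\lambda_1}e^{-\lambda_1 D}\le \frac{1}{2}\lambda_1\lambda_2 D^2$. -/

import Mathlib

open Real

/-- Lipschitz-type bound: for `0 ≤ a ≤ b` and `0 ≤ x`,
`exp (-(a*x)) - exp (-(b*x)) ≤ (b - a) * x`. -/
lemma exp_diff_le (a b x : ℝ) (ha : 0 ≤ a) (hab : a ≤ b) (hx : 0 ≤ x) :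
    Real.exp (-(a * x)) - Real.exp (-(b * x)) ≤ (b - a) * x := by
  have h1 : Real.exp (-(b * x)) = Real.exp (-(a * x)) * Real.exp (-((b - a) * x)) := by
    rw [← Real.exp_add]; ring_nf
  have h2 : 1 - Real.exp (-((b - a) * x)) ≤ (b - a) * x := by
    have := Real.add_one_le_exp (-((b - a) * x))
    linarith
  have h3 : Real.exp (-(a * x)) ≤ 1 := by
    apply Real.exp_le_one_iff.2
    nlinarith
  have h4 : 0 ≤ 1 - Real.exp (-((b - a) * x)) := by
    have : Real.exp (-((b - a) * x)) ≤ 1 := by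
      apply Real.exp_le_one_iff.2
      nlinarith
    linarith
  calc Real.exp (-(a * x)) - Real.exp (-(b * x))
      = Real.exp (-(a * x)) * (1 - Real.exp (-((b - a) * x))) := by rw [h1]; ring
    _ ≤ 1 * ((b - a) * x) := by
        apply mul_le_mul h3 h2 h4 zero_le_one
    _ = (b - a) * x := by ring

lemma main_ineq (l₁ l₂ : ℝ) (hl₁ : 0 < l₁) (hlt : l₁ < l₂)
    (D : ℝ) (hD : 0 ≤ D) :
    1 + (l₁ / (l₂ - l₁)) * Real.exp (-(l₂ * D)) - (l₂ / (l₂ - l₁)) * Real.exp (-(l₁ * D))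
      ≤ (1 / 2) * l₁ * l₂ * D ^ 2 := by
  have hd : 0 < l₂ - l₁ := by linarith
  have hl₂ : 0 < l₂ := by linarith
  set g : ℝ → ℝ := fun x => (1 / 2) * l₁ * l₂ * x ^ 2
      + (l₂ / (l₂ - l₁)) * Real.exp (-(l₁ * x))
      - (l₁ / (l₂ - l₁)) * Real.exp (-(l₂ * x)) - 1 with hg
  have hderiv : ∀ x : ℝ, HasDerivAt g
      (l₁ * l₂ * x + (l₂ / (l₂ - l₁)) * (-l₁ * Real.exp (-(l₁ * x)))
        - (l₁ / (l₂ - l₁)) * (-l₂ * Real.exp (-(l₂ * x)))) x := by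
    intro x
    have h1 : HasDerivAt (fun x : ℝ => Real.exp (-(l₁ * x))) (-l₁ * Real.exp (-(l₁ * x))) x := by
      have := (Real.hasDerivAt_exp (-(l₁ * x))).comp x
        (((hasDerivAt_id x).const_mul l₁).neg)
      exact this.congr_deriv (by ring)
    have h2 : HasDerivAt (fun x : ℝ => Real.exp (-(l₂ * x))) (-l₂ * Real.exp (-(l₂ * x))) x := by
      have := (Real.hasDerivAt_exp (-(l₂ * x))).comp x
        (((hasDerivAt_id x).const_mul l₂).neg)
      exact this.congr_deriv (by ring)
    have hsq : HasDerivAt (fun x : ℝ => (1 / 2) * l₁ * l₂ * x ^ 2)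
        (l₁ * l₂ * x) x := by
      have := ((hasDerivAt_pow 2 x).const_mul ((1 / 2) * l₁ * l₂))
      exact this.congr_deriv (by rw [show (2:ℕ) - 1 = 1 from rfl]; push_cast; ring)
    have := ((hsq.add (h1.const_mul (l₂ / (l₂ - l₁)))).sub
      (h2.const_mul (l₁ / (l₂ - l₁)))).sub_const 1
    simpa [hg] using this
  have hderiv_nonneg : ∀ x : ℝ, 0 ≤ x →
      0 ≤ l₁ * l₂ * x + (l₂ / (l₂ - l₁)) * (-l₁ * Real.exp (-(l₁ * x)))
        - (l₁ / (l₂ - l₁)) * (-l₂ * Real.exp (-(l₂ * x))) := by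
    intro x hx
    have key := exp_diff_le l₁ l₂ x hl₁.le hlt.le hx
    have hpos : 0 < l₁ * l₂ / (l₂ - l₁) := by positivity
    have heq : l₁ * l₂ * x + (l₂ / (l₂ - l₁)) * (-l₁ * Real.exp (-(l₁ * x)))
        - (l₁ / (l₂ - l₁)) * (-l₂ * Real.exp (-(l₂ * x)))
        = l₁ * l₂ * x - (l₁ * l₂ / (l₂ - l₁)) *
          (Real.exp (-(l₁ * x)) - Real.exp (-(l₂ * x))) := by
      field_simp
      ring
    rw [heq]
    have h1 : (l₁ * l₂ / (l₂ - l₁)) * (Real.exp (-(l₁ * x)) - Real.exp (-(l₂ * x)))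
        ≤ (l₁ * l₂ / (l₂ - l₁)) * ((l₂ - l₁) * x) :=
      mul_le_mul_of_nonneg_left key hpos.le
    have h2 : (l₁ * l₂ / (l₂ - l₁)) * ((l₂ - l₁) * x) = l₁ * l₂ * x := by
      field_simp
    linarith
  have hmono : MonotoneOn g (Set.Ici 0) := by
    apply monotoneOn_of_deriv_nonneg (convex_Ici 0)
    · exact fun x _ => ((hderiv x).continuousAt).continuousWithinAt
    · intro x _
      exact (hderiv x).differentiableAt.differentiableWithinAt
    · intro x hx
      rw [(hderiv x).deriv]
      exact hderiv_nonneg x (le_of_lt (by simpa using hx))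
  have h0 : g 0 = 0 := by
    simp [hg]
    field_simp
    norm_num
  have := hmono (Set.mem_Ici.2 (le_refl (0:ℝ))) (Set.mem_Ici.2 hD) hD
  rw [h0] at this
  simp only [hg] at this
  linarith

theorem hypoexponential_cdf_le_taylor_bound
    (l₁ l₂ : ℝ) (hl₁ : 0 < l₁) (hl₂ : 0 < l₂) (hne : l₁ ≠ l₂)
    (D : ℝ) (hD : 0 ≤ D) :
    1 + (l₁ / (l₂ - l₁)) * Real.exp (-(l₂ * D)) - (l₂ / (l₂ - l₁)) * Real.exp (-(l₁ * D))
      ≤ (1 / 2) * l₁ * l₂ * D ^ 2 := by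
  rcases lt_or_gt_of_ne hne with h | h
  · exact main_ineq l₁ l₂ hl₁ h D hD
  · have key := main_ineq l₂ l₁ hl₂ h D hD
    rw [show l₂ / (l₁ - l₂) = -(l₂ / (l₂ - l₁)) by rw [← neg_sub l₂ l₁, div_neg],
        show l₁ / (l₁ - l₂) = -(l₁ / (l₂ - l₁)) by rw [← neg_sub l₂ l₁, div_neg]] at key
    have h2 : (1 / 2) * l₂ * l₁ * D ^ 2 = (1 / 2) * l₁ * l₂ * D ^ 2 := by ring
    linarith
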